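/- Fix a heat-bath bias 𝓑ᵢ > 0. Define the operation 3BC_hb on a finite list of bias values: it selects three entries 𝓑_k ≤ 𝓑_l ≤ 𝓑_m, replaces 𝓑_m by (𝓑_k + 𝓑_l + 𝓑_m − 𝓑_k𝓑_l𝓑_m)/2 (assumed to be ≥ 𝓑_m), and replaces the other two entries by 𝓑ᵢ. Consider any algorithm that starts from N entries all equal to 𝓑ᵢ and alternates 3BC_hb operations with arbitrary permutations of the entries. Then at every stage, if the entries are listed in nondecreasing order as 𝓑_1 ≤ 𝓑_2 ≤ ... ≤ 𝓑_N, we have 𝓑_j ≤ 𝓑ᵢ · F_j for all 1 ≤ j ≤ N, where F_j is the j-th Fibonacci number (F_1 = F_2 = 1, F_{j} = F_{j-1} + F_{j-2}). -/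

import Mathlib

/-- One step of a heat-bath cooling algorithm on a register of `N` bias values:
either an arbitrary permutation of the entries, or a `3BC_hb` operation which selects three
distinct entries with `v i ≤ v j ≤ v k`, replaces `v k` by
`(v i + v j + v k − v i · v j · v k)/2` (assumed to be `≥ v k`), and resets the other two
entries to the heat-bath bias `Bi`. -/
inductive Step (Bi : ℝ) (N : ℕ) : (Fin N → ℝ) → (Fin N → ℝ) → Prop
  | perm (v : Fin N → ℝ) (σ : Equiv.Perm (Fin N)) : Step Bi N v (v ∘ σ)
  | bc (v : Fin N → ℝ) (i j k : Fin N) (hij : i ≠ j) (hik : i ≠ k) (hjk : j ≠ k)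
      (h1 : v i ≤ v j) (h2 : v j ≤ v k)
      (hinc : v k ≤ (v i + v j + v k - v i * v j * v k) / 2) :
      Step Bi N v
        (Function.update (Function.update
          (Function.update v k ((v i + v j + v k - v i * v j * v k) / 2)) i Bi) j Bi)

/-- Key algebraic fact: if `a + b ≤ X` and `c ≤ X` (all nonnegative), then the majority
bias `(a+b+c-abc)/2` is at most `X`. -/
lemma key3 (a b c X : ℝ) (ha : 0 ≤ a) (hb : 0 ≤ b) (hc : 0 ≤ c) (hX : 0 ≤ X)
    (hab : a + b ≤ X) (hcX : c ≤ X) : (a + b + c - a * b * c) / 2 ≤ X := by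
  rcases le_or_gt (a * b) 1 with h | h
  · nlinarith [mul_nonneg ha hb]
  · nlinarith [mul_nonneg ha hb]

/-- The invariant: every entry is at least `Bi`, and for every `t ≤ N` at least `t`
entries are at most `Bi * F_t`. -/
def BiasInv (Bi : ℝ) (N : ℕ) (v : Fin N → ℝ) : Prop :=
  (∀ x, Bi ≤ v x) ∧
  ∀ t : ℕ, t ≤ N →
    t ≤ (Finset.univ.filter (fun x => v x ≤ Bi * Nat.fib t)).card

lemma inv_init (Bi : ℝ) (hBi : 0 < Bi) (N : ℕ) : BiasInv Bi N (fun _ => Bi) := by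
  refine ⟨fun x => le_refl _, fun t ht => ?_⟩
  rcases Nat.eq_zero_or_pos t with rfl | htpos
  · simp
  · have hfib : (1 : ℝ) ≤ (Nat.fib t : ℝ) := by
      exact_mod_cast Nat.one_le_iff_ne_zero.mpr (Nat.fib_pos.mpr htpos).ne'
    have : (Finset.univ.filter (fun _ : Fin N => Bi ≤ Bi * Nat.fib t)) = Finset.univ := by
      refine Finset.filter_true_of_mem fun x _ => ?_
      exact le_mul_of_one_le_right hBi.le hfib
    rw [this]
    simpa using ht

lemma inv_step {Bi : ℝ} (hBi : 0 < Bi) {N : ℕ} {v w : Fin N → ℝ}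
    (h : Step Bi N v w) (hv : BiasInv Bi N v) : BiasInv Bi N w := by
  obtain ⟨hJ, hC⟩ := hv
  cases h with
  | perm σ =>
    refine ⟨fun x => hJ _, fun t ht => ?_⟩
    have hcard : (Finset.univ.filter (fun x => (v ∘ σ) x ≤ Bi * Nat.fib t)).card
        = (Finset.univ.filter (fun x => v x ≤ Bi * Nat.fib t)).card := by
      refine Finset.card_bij (fun x _ => σ x) ?_ ?_ ?_
      · intro a ha
        simp only [Finset.mem_filter, Finset.mem_univ, true_and] at ha ⊢
        exact ha
      · intro a _ b _ hab
        exact σ.injective hab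
      · intro b hb
        refine ⟨σ.symm b, ?_, by simp⟩
        simp only [Finset.mem_filter, Finset.mem_univ, true_and, Function.comp] at hb ⊢
        simpa using hb
    rw [hcard]
    exact hC t ht
  | bc i j k hij hik hjk h1 h2 hinc =>
    set m : ℝ := (v i + v j + v k - v i * v j * v k) / 2 with hm
    set u : Fin N → ℝ :=
      Function.update (Function.update (Function.update v k m) i Bi) j Bi with hu
    have hui : u i = Bi := by
      simp [hu, Function.update_apply, hij, hik]
    have huj : u j = Bi := by
      simp [hu, Function.update_apply]
    have huk : u k = m := by
      simp [hu, Function.update_apply, hjk.symm, hik.symm]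
    have hux : ∀ x, x ≠ i → x ≠ j → x ≠ k → u x = v x := by
      intro x hxi hxj hxk
      simp [hu, Function.update_apply, hxi, hxj, hxk]
    constructor
    · intro x
      rcases eq_or_ne x i with rfl | hxi
      · rw [hui]
      rcases eq_or_ne x j with rfl | hxj
      · rw [huj]
      rcases eq_or_ne x k with hxk | hxk
      · rw [hxk, huk]; exact le_trans (hJ k) hinc
      · rw [hux x hxi hxj hxk]; exact hJ x
    · intro t ht
      -- notation
      set c1 : ℝ := Bi * Nat.fib t with hc1
      set S' := Finset.univ.filter (fun x => u x ≤ c1) with hS'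
      rcases Nat.eq_zero_or_pos t with rfl | htpos
      · simp
      have hfib1 : (1 : ℝ) ≤ (Nat.fib t : ℝ) := by
        exact_mod_cast Nat.one_le_iff_ne_zero.mpr (Nat.fib_pos.mpr htpos).ne'
      have hBic1 : Bi ≤ c1 := le_mul_of_one_le_right hBi.le hfib1
      have hiS' : i ∈ S' := by simp [hS', hui, hBic1]
      have hjS' : j ∈ S' := by simp [hS', huj, hBic1]
      -- the old filter sets
      have hsub : ∀ c : ℝ,
          (Finset.univ.filter (fun x => v x ≤ c)) \ {i, j, k} ⊆
            Finset.univ.filter (fun x => u x ≤ c) := by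
        intro c x hx
        simp only [Finset.mem_sdiff, Finset.mem_filter, Finset.mem_univ, true_and,
          Finset.mem_insert, Finset.mem_singleton, not_or] at hx ⊢
        obtain ⟨hvx, hxi, hxj, hxk⟩ := hx
        rw [hux x hxi hxj hxk]
        exact hvx
      -- a generic counting step
      have hcount : ∀ A : Finset (Fin N), A = Finset.univ.filter (fun x => v x ≤ c1) →
          A.card ≤ (A \ ({i, j, k} : Finset (Fin N))).card + 3 := by
        intro A _
        calc A.card ≤ (A \ ({i, j, k} : Finset (Fin N))).card + ({i, j, k} : Finset (Fin N)).card :=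
              Finset.card_le_card_sdiff_add_card
          _ ≤ (A \ ({i, j, k} : Finset (Fin N))).card + 3 := by
              have : ({i, j, k} : Finset (Fin N)).card ≤ 3 := by
                exact (Finset.card_insert_le i ({j, k} : Finset (Fin N))).trans
                  (Nat.succ_le_succ Finset.card_le_two)
              omega
      set A := Finset.univ.filter (fun x => v x ≤ c1) with hA
      have hAcard : t ≤ A.card := hC t ht
      have hdisj : Disjoint (A \ ({i, j, k} : Finset (Fin N))) ({i, j} : Finset (Fin N)) := by
        refine Finset.disjoint_left.mpr ?_
        intro x hx hx2
        simp only [Finset.mem_sdiff, Finset.mem_insert, Finset.mem_singleton, not_or] at hx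
        simp only [Finset.mem_insert, Finset.mem_singleton] at hx2
        rcases hx2 with rfl | rfl
        · exact hx.2.1 rfl
        · exact hx.2.2.1 rfl
      have hcij : (({i, j} : Finset (Fin N))).card = 2 := by
        rw [Finset.card_insert_of_notMem (by simpa using hij), Finset.card_singleton]
      have hbase : (A \ ({i, j, k} : Finset (Fin N))) ∪ {i, j} ⊆ S' := by
        refine Finset.union_subset (le_trans (hsub c1) ?_) ?_
        · exact le_refl _
        · intro x hx
          simp only [Finset.mem_insert, Finset.mem_singleton] at hx
          rcases hx with rfl | rfl
          · exact hiS'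
          · exact hjS'
      have hbasecard :
          (A \ ({i, j, k} : Finset (Fin N))).card + 2 ≤ S'.card := by
        have := Finset.card_le_card hbase
        rwa [Finset.card_union_of_disjoint hdisj, hcij] at this
      -- main case split
      by_cases hck : v k ≤ c1
      · -- k was in A
        rcases Nat.lt_or_ge t 3 with ht3 | ht3
        · -- t ≤ 2 : i and j alone suffice
          have : ({i, j} : Finset (Fin N)) ⊆ S' := by
            intro x hx
            simp only [Finset.mem_insert, Finset.mem_singleton] at hx
            rcases hx with rfl | rfl
            · exact hiS'
            · exact hjS'
          have := Finset.card_le_card this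
          rw [hcij] at this
          omega
        · obtain ⟨s, rfl⟩ : ∃ s, t = s + 3 := ⟨t - 3, by omega⟩
          have hfibeq : (Nat.fib (s + 3) : ℝ) = Nat.fib (s + 1) + Nat.fib (s + 2) := by
            have := Nat.fib_add_two (n := s + 1)
            push_cast [this]
            ring
          by_cases hbj : v j ≤ Bi * Nat.fib (s + 2)
          · by_cases hai : v i ≤ Bi * Nat.fib (s + 1)
            · -- key case: m ≤ c1, so k ∈ S' too
              have hmle : m ≤ c1 := by
                rw [hm]
                apply key3 _ _ _ _ (le_trans hBi.le (hJ i)) (le_trans hBi.le (hJ j))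
                  (le_trans hBi.le (hJ k)) (le_trans hBi.le hBic1)
                · rw [hc1, hfibeq]
                  calc v i + v j ≤ Bi * Nat.fib (s + 1) + Bi * Nat.fib (s + 2) :=
                        add_le_add hai hbj
                    _ = Bi * ((Nat.fib (s + 1) : ℝ) + Nat.fib (s + 2)) := by ring
                · exact hck
              have hkS' : k ∈ S' := by simp [hS', huk, hmle]
              have hb2 : insert k ((A \ ({i, j, k} : Finset (Fin N))) ∪ {i, j}) ⊆ S' :=
                Finset.insert_subset hkS' hbase
              have hknot : k ∉ (A \ ({i, j, k} : Finset (Fin N))) ∪ {i, j} := by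
                intro hmem
                rcases Finset.mem_union.mp hmem with h'' | h''
                · exact (Finset.mem_sdiff.mp h'').2 (by simp)
                · rcases Finset.mem_insert.mp h'' with h3 | h3
                  · exact hik h3.symm
                  · exact hjk ((Finset.mem_singleton.mp h3).symm)
              have := Finset.card_le_card hb2
              rw [Finset.card_insert_of_notMem hknot,
                Finset.card_union_of_disjoint hdisj, hcij] at this
              have h3 := hcount A hA
              omega
            · -- v i > Bi * fib (s+1): then i,j,k ∉ A_{s+1} but all ∈ A, so A.card ≥ t+1
              push_neg at hai
              have hAs : s + 1 ≤ (Finset.univ.filter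
                  (fun x => v x ≤ Bi * Nat.fib (s + 1))).card := hC (s + 1) (by omega)
              have hsubA : (Finset.univ.filter (fun x => v x ≤ Bi * Nat.fib (s + 1)))
                  ∪ {i, j, k} ⊆ A := by
                refine Finset.union_subset ?_ ?_
                · intro x hx
                  simp only [Finset.mem_filter, Finset.mem_univ, true_and] at hx
                  simp only [hA, Finset.mem_filter, Finset.mem_univ, true_and]
                  refine le_trans hx ?_
                  rw [hc1]
                  exact mul_le_mul_of_nonneg_left
                    (by exact_mod_cast Nat.fib_mono (by omega)) hBi.le
                · intro x hx
                  simp only [Finset.mem_insert, Finset.mem_singleton] at hx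
                  simp only [hA, Finset.mem_filter, Finset.mem_univ, true_and]
                  rcases hx with rfl | rfl | rfl
                  · exact le_trans h1 (le_trans h2 hck)
                  · exact le_trans h2 hck
                  · exact hck
              have hdisj2 : Disjoint (Finset.univ.filter
                  (fun x => v x ≤ Bi * Nat.fib (s + 1))) ({i, j, k} : Finset (Fin N)) := by
                refine Finset.disjoint_left.mpr ?_
                intro x hx hx2
                simp only [Finset.mem_filter, Finset.mem_univ, true_and] at hx
                simp only [Finset.mem_insert, Finset.mem_singleton] at hx2
                rcases hx2 with rfl | rfl | rfl
                · exact absurd hx (not_le.mpr hai)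
                · exact absurd hx (not_le.mpr (lt_of_lt_of_le hai h1))
                · exact absurd hx (not_le.mpr (lt_of_lt_of_le hai (le_trans h1 h2)))
              have hcijk : (({i, j, k} : Finset (Fin N))).card = 3 := by
                rw [Finset.card_insert_of_notMem (by simp [hij, hik]),
                  Finset.card_insert_of_notMem (by simpa using hjk),
                  Finset.card_singleton]
              have := Finset.card_le_card hsubA
              rw [Finset.card_union_of_disjoint hdisj2, hcijk] at this
              have h3 := hcount A hA
              omega
          · -- v j > Bi * fib (s+2): then j,k ∉ A_{s+2} but both ∈ A, so A.card ≥ t+1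
            push_neg at hbj
            have hAs : s + 2 ≤ (Finset.univ.filter
                (fun x => v x ≤ Bi * Nat.fib (s + 2))).card := hC (s + 2) (by omega)
            have hsubA : (Finset.univ.filter (fun x => v x ≤ Bi * Nat.fib (s + 2)))
                ∪ {j, k} ⊆ A := by
              refine Finset.union_subset ?_ ?_
              · intro x hx
                simp only [Finset.mem_filter, Finset.mem_univ, true_and] at hx
                simp only [hA, Finset.mem_filter, Finset.mem_univ, true_and]
                refine le_trans hx ?_
                rw [hc1]
                exact mul_le_mul_of_nonneg_left
                  (by exact_mod_cast Nat.fib_mono (by omega)) hBi.le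
              · intro x hx
                simp only [Finset.mem_insert, Finset.mem_singleton] at hx
                simp only [hA, Finset.mem_filter, Finset.mem_univ, true_and]
                rcases hx with rfl | rfl
                · exact le_trans h2 hck
                · exact hck
            have hdisj2 : Disjoint (Finset.univ.filter
                (fun x => v x ≤ Bi * Nat.fib (s + 2))) ({j, k} : Finset (Fin N)) := by
              refine Finset.disjoint_left.mpr ?_
              intro x hx hx2
              simp only [Finset.mem_filter, Finset.mem_univ, true_and] at hx
              simp only [Finset.mem_insert, Finset.mem_singleton] at hx2
              rcases hx2 with rfl | rfl
              · exact absurd hx (not_le.mpr hbj)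
              · exact absurd hx (not_le.mpr (lt_of_lt_of_le hbj h2))
            have hcjk : (({j, k} : Finset (Fin N))).card = 2 := by
              rw [Finset.card_insert_of_notMem (by simpa using hjk), Finset.card_singleton]
            have := Finset.card_le_card hsubA
            rw [Finset.card_union_of_disjoint hdisj2, hcjk] at this
            have h3 := hcount A hA
            omega
      · -- v k > c1 : k ∉ A
        have hknotA : k ∉ A := by
          simp only [hA, Finset.mem_filter, Finset.mem_univ, true_and]
          exact hck
        have hsd : A \ ({i, j} : Finset (Fin N)) = A \ ({i, j, k} : Finset (Fin N)) := by
          ext x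
          simp only [Finset.mem_sdiff, Finset.mem_insert, Finset.mem_singleton, not_or]
          constructor
          · rintro ⟨hxA, hxi, hxj⟩
            exact ⟨hxA, hxi, hxj, fun h => hknotA (h ▸ hxA)⟩
          · rintro ⟨hxA, hxi, hxj, _⟩
            exact ⟨hxA, hxi, hxj⟩
        have h4 : A.card ≤ (A \ ({i, j} : Finset (Fin N))).card + 2 := by
          calc A.card ≤ (A \ ({i, j} : Finset (Fin N))).card + ({i, j} : Finset (Fin N)).card :=
                Finset.card_le_card_sdiff_add_card
            _ ≤ _ := by rw [hcij]
        rw [hsd] at h4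
        omega

lemma inv_reach (Bi : ℝ) (hBi : 0 < Bi) (N : ℕ) (v : Fin N → ℝ)
    (hreach : Relation.ReflTransGen (Step Bi N) (fun _ => Bi) v) : BiasInv Bi N v := by
  induction hreach with
  | refl => exact inv_init Bi hBi N
  | tail _ hstep ih => exact inv_step hBi hstep ih

theorem stmt7 (Bi : ℝ) (hBi : 0 < Bi) (N : ℕ) (v : Fin N → ℝ)
    (hreach : Relation.ReflTransGen (Step Bi N) (fun _ => Bi) v)
    (σ : Equiv.Perm (Fin N)) (hsorted : Monotone (v ∘ σ)) (j : Fin N) :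
    v (σ j) ≤ Bi * Nat.fib (j.val + 1) := by
  obtain ⟨-, hC⟩ := inv_reach Bi hBi N v hreach
  by_contra hlt
  push_neg at hlt
  set t := j.val + 1 with htdef
  have ht : t ≤ N := j.isLt
  have hcard := hC t ht
  -- every x with v x ≤ Bi * fib t has σ.symm x < j
  have hmap : ∀ x ∈ Finset.univ.filter (fun x => v x ≤ Bi * Nat.fib t),
      (σ.symm x : Fin N) < j := by
    intro x hx
    simp only [Finset.mem_filter, Finset.mem_univ, true_and] at hx
    by_contra hge
    push_neg at hge
    have : v (σ j) ≤ v (σ (σ.symm x)) := hsorted hge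
    rw [Equiv.apply_symm_apply] at this
    exact absurd (le_trans this hx) (not_le.mpr hlt)
  have hinj : Finset.card (Finset.univ.filter (fun x => v x ≤ Bi * Nat.fib t))
      ≤ (Finset.range j.val).card := by
    refine Finset.card_le_card_of_injOn (fun x => ((σ.symm x : Fin N) : ℕ)) ?_ ?_
    · intro x hx
      simp only [Finset.mem_range]
      exact Finset.mem_coe.mpr (Finset.mem_range.mpr (hmap x hx))
    · intro a _ b _ hab
      have : σ.symm a = σ.symm b := Fin.val_injective hab
      exact σ.symm.injective this
  rw [Finset.card_range] at hinj
  omega
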